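/- Let Φ be an affine root system on a Euclidean affine space 𝔞. For any point x ∈ 𝔞, the set Φ_x = {α ∈ Φ : α(x) = 0} is a finite root system (in particular it is finite). -/

import Mathlib

open RealInnerProductSpace

/-- An affine linear function on the Euclidean space `V` is encoded as a pair
`α = (ᾱ, c) ∈ V × ℝ`, representing `x ↦ ⟪ᾱ, x⟫ + c`; `ᾱ` is its gradient. -/
noncomputable def affEval {V : Type*} [NormedAddCommGroup V] [InnerProductSpace ℝ V]
    (α : V × ℝ) (x : V) : ℝ :=
  ⟪α.1, x⟫ + α.2

/-- An affine root system: a set of non-constant affine functions such that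
(a) `ℝα ∩ Φ = {α, -α}` for all `α ∈ Φ`, (b) `⟪ᾱ, β̄^∨⟫ ∈ ℤ` for all `α, β ∈ Φ`,
(c) `s_α(Φ) = Φ` (where `s_α` acts by `β ↦ β - ⟪β̄, ᾱ^∨⟫ • α`), and
(d) the set of gradients `Φ̄` is finite. -/
def IsAffineRootSystem {V : Type*} [NormedAddCommGroup V] [InnerProductSpace ℝ V]
    (Φ : Set (V × ℝ)) : Prop :=
  (∀ α ∈ Φ, α.1 ≠ 0) ∧
  (∀ α ∈ Φ, -α ∈ Φ ∧ ∀ t : ℝ, t • α ∈ Φ → t • α = α ∨ t • α = -α) ∧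
  (∀ α ∈ Φ, ∀ β ∈ Φ, ∃ k : ℤ, ⟪α.1, (2 / ‖β.1‖ ^ 2) • β.1⟫ = (k : ℝ)) ∧
  (∀ α ∈ Φ, ∀ β ∈ Φ, β - ⟪β.1, (2 / ‖α.1‖ ^ 2) • α.1⟫ • α ∈ Φ) ∧
  (Prod.fst '' Φ).Finite

/-- For an affine root system `Φ` and any point `x`, the subsystem
`Φ_x = {α ∈ Φ : α(x) = 0}` is a finite root system; in particular it is finite. -/
theorem affineRootSystem_vanishing_at_point_finite
    {V : Type*} [NormedAddCommGroup V] [InnerProductSpace ℝ V]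
    (Φ : Set (V × ℝ)) (hΦ : IsAffineRootSystem Φ) (x : V) :
    {α ∈ Φ | affEval α x = 0}.Finite ∧
      IsAffineRootSystem {α ∈ Φ | affEval α x = 0} := by
  obtain ⟨h0, hneg, hint, hrefl, hfin⟩ := hΦ
  have hfinx : {α ∈ Φ | affEval α x = 0}.Finite := by
    apply Set.Finite.subset ((hfin.image (fun v => (v, -(⟪v, x⟫ : ℝ)))))
    rintro α ⟨hα, hx⟩
    refine ⟨α.1, ⟨α, hα, rfl⟩, ?_⟩
    have : α.2 = -(⟪α.1, x⟫ : ℝ) := by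
      have := hx
      simp only [affEval] at this
      linarith
    simp [← this]
  refine ⟨hfinx, ?_, ?_, ?_, ?_, ?_⟩
  · exact fun α hα => h0 α hα.1
  · rintro α ⟨hα, hx⟩
    refine ⟨⟨(hneg α hα).1, ?_⟩, fun t ht => (hneg α hα).2 t ht.1⟩
    simp only [affEval] at hx ⊢
    simp [inner_neg_left]
    linarith
  · exact fun α hα β hβ => hint α hα.1 β hβ.1
  · rintro α ⟨hα, hxα⟩ β ⟨hβ, hxβ⟩
    refine ⟨hrefl α hα β hβ, ?_⟩
    simp only [affEval] at hxα hxβ ⊢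
    simp only [Prod.fst_sub, Prod.snd_sub, Prod.smul_fst, Prod.smul_snd,
      inner_sub_left, inner_smul_left, smul_eq_mul, RCLike.ofReal_real_eq_id, id, starRingEnd_apply, star_trivial]
    linear_combination hxβ - (inner ℝ β.1 ((2 / ‖α.1‖ ^ 2) • α.1) : ℝ) * hxα
  · exact hfin.subset (Set.image_mono fun α hα => hα.1)
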